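/- There exist a maximal mechanism ψ, a problem P̃, and a student i with false report P̄_i such that i strictly gains by the misreport (ψ_i(P̄_i, P̃_{-i}) P̃_i ψ_i(P̃)) and strictly fewer students are assigned under the misreport: |ψ(P̃)| > |ψ(P̄_i, P̃_{-i})|. Concretely: students include i and j, schools a and b each with capacity 1; true preferences P̃_i: a,b,∅ and P̃_j: a,∅ (all others find everything unacceptable). Any maximal mechanism at P̃ must assign both i and j (i→b, j→a), but if ψ at (P̄_i, P̃_{-i}) with P̄_i: a,∅ assigns a to i, then i gains by reporting P̄_i while only one student is assigned. -/

import Mathlib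

open Finset
open scoped Classical

/-- A matching assigns each student a school or `none` (unassigned). -/
abbrev Matching (I S : Type*) := I → Option S

/-- An individual strict preference over `S ∪ {∅}`: an injective utility
function on `Option S` (higher value = more preferred, `none` = being
unassigned). -/
abbrev IndPref (S : Type*) := {f : Option S → ℕ // Function.Injective f}

/-- A preference profile: one strict preference per student. -/
abbrev Prof (I S : Type*) := I → IndPref S

/-- Strict school priorities: for each school, an injective rank over
students (higher value = higher priority). -/
abbrev Prio (I S : Type*) := {p : S → I → ℕ // ∀ s, Function.Injective (p s)}

/-- A mechanism maps reported preference profiles to matchings. -/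
abbrev Mechanism (I S : Type*) := Prof I S → Matching I S

variable {I S : Type*} [Fintype I] [DecidableEq I] [Fintype S] [DecidableEq S]

/-- Capacity feasibility. -/
def Feasible (q : S → ℕ) (μ : Matching I S) : Prop :=
  ∀ s : S, (univ.filter fun i => μ i = some s).card ≤ q s

/-- Individual rationality with respect to profile `P`. -/
def IndivRational (P : Prof I S) (μ : Matching I S) : Prop :=
  ∀ i, (P i).1 none ≤ (P i).1 (μ i)

/-- Number of assigned students. -/
def msize (μ : Matching I S) : ℕ := (univ.filter fun i => μ i ≠ none).card

/-- Maximality: no feasible individually rational matching assigns strictly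
more students. -/
def MaximalMatching (P : Prof I S) (q : S → ℕ) (μ : Matching I S) : Prop :=
  ∀ μ' : Matching I S, Feasible q μ' → IndivRational P μ' → msize μ' ≤ msize μ

/-- `μ'` Pareto dominates `μ`. -/
def Dominates (P : Prof I S) (μ' μ : Matching I S) : Prop :=
  (∀ i, (P i).1 (μ i) ≤ (P i).1 (μ' i)) ∧ ∃ j, (P j).1 (μ j) < (P j).1 (μ' j)

/-- Pareto efficiency among feasible individually rational matchings. -/
def Efficient (P : Prof I S) (q : S → ℕ) (μ : Matching I S) : Prop :=
  ¬ ∃ μ', Feasible q μ' ∧ IndivRational P μ' ∧ Dominates P μ' μ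

/-- Non-wastefulness. -/
def NonWasteful (P : Prof I S) (q : S → ℕ) (μ : Matching I S) : Prop :=
  ∀ i s, (P i).1 (μ i) < (P i).1 (some s) →
    (univ.filter fun j => μ j = some s).card = q s

/-- Fairness (no justified envy). -/
def Fair (P : Prof I S) (pr : Prio I S) (μ : Matching I S) : Prop :=
  ¬ ∃ i s j, (P i).1 (μ i) < (P i).1 (some s) ∧ μ j = some s ∧ pr.1 s j < pr.1 s i

/-- Stability: individually rational, non-wasteful and fair. -/
def Stable (P : Prof I S) (pr : Prio I S) (q : S → ℕ) (μ : Matching I S) : Prop :=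
  Feasible q μ ∧ IndivRational P μ ∧ NonWasteful P q μ ∧ Fair P pr μ

/-- Fairness for unassigned students. -/
def FairForUnassigned (P : Prof I S) (pr : Prio I S) (μ : Matching I S) : Prop :=
  ¬ ∃ i s j, μ i = none ∧ (P i).1 none < (P i).1 (some s) ∧ μ j = some s ∧
    pr.1 s j < pr.1 s i

/-- `(a, t)` is an improving chain for `μ`: each student `a k` strictly
prefers `t k` to their assignment, each school `t k` (for `k < n`) is
currently occupied by the next student `a (k+1)`, and the last school has
excess capacity. -/
def IsImpChain (P : Prof I S) (q : S → ℕ) (μ : Matching I S)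
    (n : ℕ) (a : Fin (n + 1) → I) (t : Fin (n + 1) → S) : Prop :=
  Function.Injective a ∧
  (∀ k, (P (a k)).1 (μ (a k)) < (P (a k)).1 (some (t k))) ∧
  (∀ k : Fin n, μ (a k.succ) = some (t k.castSucc)) ∧
  (univ.filter fun j => μ j = some (t (Fin.last n))).card < q (t (Fin.last n))

/-- `(a, t)` is an improving cycle for `μ`: each student `a k` is assigned
to `t k` and strictly prefers the school `t (k+1)` vacated by the next
student in the cycle. -/
def IsImpCycle (P : Prof I S) (μ : Matching I S)
    (n : ℕ) (a : Fin (n + 1) → I) (t : Fin (n + 1) → S) : Prop :=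
  Function.Injective a ∧
  (∀ k, μ (a k) = some (t k)) ∧
  (∀ k, (P (a k)).1 (some (t k)) < (P (a k)).1 (some (t (k + 1))))

def HasImpChain (P : Prof I S) (q : S → ℕ) (μ : Matching I S) : Prop :=
  ∃ n a t, IsImpChain P q μ n a t

def HasImpCycle (P : Prof I S) (μ : Matching I S) : Prop :=
  ∃ n a t, IsImpCycle P μ n a t

/-- Implementing one improving chain or cycle: every student involved moves
to the school they prefer in the chain/cycle, all others keep their
assignment. -/
def ImplementStep (P : Prof I S) (q : S → ℕ) (μ μ' : Matching I S) : Prop :=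
  (∃ n a t, IsImpChain P q μ n a t ∧ (∀ k, μ' (a k) = some (t k)) ∧
    ∀ j, (∀ k, j ≠ a k) → μ' j = μ j) ∨
  (∃ n a t, IsImpCycle P μ n a t ∧ (∀ k, μ' (a k) = some (t (k + 1))) ∧
    ∀ j, (∀ k, j ≠ a k) → μ' j = μ j)

/-- One refinement step of the first stage of EAM: keep only the matchings
assigning student `i`, whenever such matchings exist. -/
noncomputable def xiStep (A : Set (Matching I S)) (i : I) : Set (Matching I S) :=
  if ∃ μ ∈ A, μ i ≠ none then {μ ∈ A | μ i ≠ none} else A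

/-- The set `ξ^n` of the first stage of EAM, for the enumeration `L` of the
students, starting from all feasible individually rational matchings. -/
noncomputable def xiList (P : Prof I S) (q : S → ℕ) (L : List I) :
    Set (Matching I S) :=
  L.foldl xiStep {μ | Feasible q μ ∧ IndivRational P μ}

/-- `μ` is a possible outcome of an EAM procedure with student enumeration
`L`: it is reachable from some matching selected in the first stage by
implementing improving chains/cycles, and admits no further improving chain
or cycle. -/
def IsEAMOutcome (P : Prof I S) (q : S → ℕ) (L : List I) (μ : Matching I S) :
    Prop :=
  ∃ μ₀ ∈ xiList P q L, Relation.ReflTransGen (ImplementStep P q) μ₀ μ ∧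
    ¬ HasImpChain P q μ ∧ ¬ HasImpCycle P μ

/-- EAM mechanisms with enumeration `L`. -/
def IsEAMMech (q : S → ℕ) (L : List I) (ψ : Mechanism I S) : Prop :=
  ∀ P, IsEAMOutcome P q L (ψ P)

/-- One sub-step of Step 2 of FAM: a pair `(i, s)` violating fairness for
unassigned students is resolved by placing `i` at `s` and unassigning the
lowest-priority student currently matched to `s`. -/
def FairStep (P : Prof I S) (pr : Prio I S) (μ μ' : Matching I S) : Prop :=
  ∃ i s j, μ i = none ∧ (P i).1 none < (P i).1 (some s) ∧ μ j = some s ∧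
    pr.1 s j < pr.1 s i ∧ (∀ j', μ j' = some s → pr.1 s j ≤ pr.1 s j') ∧
    μ' = Function.update (Function.update μ j none) i (some s)

/-- FAM mechanisms: an EAM first stage followed by iterated resolution of
violations of fairness for unassigned students. -/
def IsFAMMech (q : S → ℕ) (pr : Prio I S) (L : List I) (ψ : Mechanism I S) :
    Prop :=
  ∀ P, ∃ μ₁, IsEAMOutcome P q L μ₁ ∧
    Relation.ReflTransGen (FairStep P pr) μ₁ (ψ P) ∧
    FairForUnassigned P pr (ψ P)

/-- Individually rational mechanism (with respect to reports). -/
def IRMech (q : S → ℕ) (ψ : Mechanism I S) : Prop :=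
  ∀ P, Feasible q (ψ P) ∧ IndivRational P (ψ P)

/-- MaximalMatching mechanism. -/
def MaximalMech (q : S → ℕ) (ψ : Mechanism I S) : Prop :=
  IRMech q ψ ∧ ∀ P, MaximalMatching P q (ψ P)

/-- Nash equilibrium of the preference-reporting game induced by `ψ`, with
true preferences `u`. -/
def NashEq (u : Prof I S) (ψ : Mechanism I S) (P' : Prof I S) : Prop :=
  ∀ (i : I) (Pi'' : IndPref S),
    (u i).1 (ψ (Function.update P' i Pi'') i) ≤ (u i).1 (ψ P' i)

/-- Strategy-proofness. -/
def StrategyProof (ψ : Mechanism I S) : Prop :=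
  ∀ (P : Prof I S) (i : I) (Pi' : IndPref S),
    (P i).1 (ψ (Function.update P i Pi') i) ≤ (P i).1 (ψ P i)

/-- A maximizer of `f` on the nonempty finite set `A`. -/
noncomputable def bestOf (f : Option S → ℕ) (A : Finset (Option S))
    (h : A.Nonempty) : Option S :=
  (Finset.exists_max_image A f h).choose

/-- Serial dictatorship: students pick, in the order given, their most
preferred option among `none` and the schools with remaining capacity. -/
noncomputable def sdRun (P : Prof I S) :
    List I → (S → ℕ) → Matching I S → Matching I S
  | [], _, μ => μ
  | i :: rest, rem, μ =>
    let c := bestOf (P i).1 (insert none ((univ.filter fun s => 0 < rem s).image some))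
      (insert_nonempty _ _)
    sdRun P rest (fun s => if c = some s then rem s - 1 else rem s)
      (Function.update μ i c)

/-- The serial dictatorship outcome with ordering `L` and capacities `q`. -/
noncomputable def SD (P : Prof I S) (q : S → ℕ) (L : List I) : Matching I S :=
  sdRun P L q fun _ => none


/-- Unit capacities. -/
def q15 : Fin 2 → ℕ := fun _ => 1

/-- True preferences: student i (= 0): a,b,∅ ; student j (= 1): a,∅
(schools a,b = 0,1). -/
def Pt : Prof (Fin 2) (Fin 2) := fun i =>
  if i = 0 then
    ⟨fun o => match o with | none => 0 | some s => if s = 0 then 2 else 1,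
      by decide⟩
  else
    ⟨fun o => match o with | none => 1 | some s => if s = 0 then 2 else 0,
      by decide⟩

/-- Student i's misreport: a,∅ (b unacceptable). -/
def Pbar : IndPref (Fin 2) :=
  ⟨fun o => match o with | none => 1 | some s => if s = 0 then 2 else 0,
    by decide⟩

/-- Under the truth the unique maximal matching: i → b, j → a. -/
def muBoth : Matching (Fin 2) (Fin 2) := ![some 1, some 0]

def mu1 : Matching (Fin 2) (Fin 2) := ![some 0, none]

/-- The misreported profile. -/
noncomputable def Pupd : Prof (Fin 2) (Fin 2) := Function.update Pt 0 Pbar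

lemma exists_maximal (P : Prof (Fin 2) (Fin 2)) :
    ∃ μ : Matching (Fin 2) (Fin 2), Feasible q15 μ ∧ IndivRational P μ ∧
      MaximalMatching P q15 μ := by
  classical
  set A : Finset (Matching (Fin 2) (Fin 2)) :=
    univ.filter fun μ => Feasible q15 μ ∧ IndivRational P μ with hA
  have hne : A.Nonempty := by
    refine ⟨fun _ => none, ?_⟩
    simp only [hA, mem_filter, mem_univ, true_and]
    constructor
    · intro s; simp [Feasible]
    · intro i; exact le_refl _
  obtain ⟨μ, hμA, hmax⟩ := Finset.exists_max_image A msize hne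
  simp only [hA, mem_filter, mem_univ, true_and] at hμA
  refine ⟨μ, hμA.1, hμA.2, ?_⟩
  intro μ' h1 h2
  exact hmax μ' (by simp [hA, h1, h2])

lemma msize_muBoth : msize muBoth = 2 := by
  have : (univ.filter fun i => muBoth i ≠ none) = univ := by
    apply Finset.filter_true_of_mem
    intro i _
    fin_cases i <;> simp [muBoth]
  simp [msize, this]

lemma msize_mu1 : msize mu1 = 1 := by
  have : (univ.filter fun i => mu1 i ≠ none) = {0} := by
    ext i; fin_cases i <;> simp only [Finset.mem_filter, Finset.mem_singleton, Finset.mem_univ] <;> simp [mu1]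
  simp [msize, this]

lemma msize_le_two (μ : Matching (Fin 2) (Fin 2)) : msize μ ≤ 2 := by
  calc msize μ ≤ (univ : Finset (Fin 2)).card := Finset.card_filter_le _ _
  _ = 2 := by simp

lemma feasible_muBoth : Feasible q15 muBoth := by
  intro s
  have h : (univ.filter fun i => muBoth i = some s) ⊆ {if s = 0 then 1 else 0} := by
    intro i hi
    simp only [mem_filter] at hi
    fin_cases i <;> fin_cases s <;> simp_all [muBoth]
  calc _ ≤ ({if s = 0 then 1 else 0} : Finset (Fin 2)).card := Finset.card_le_card h
  _ = 1 := by simp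
  _ ≤ q15 s := le_refl _

lemma feasible_mu1 : Feasible q15 mu1 := by
  intro s
  have h : (univ.filter fun i => mu1 i = some s) ⊆ {0} := by
    intro i hi
    simp only [mem_filter] at hi
    fin_cases i <;> simp_all [mu1]
  calc _ ≤ ({0} : Finset (Fin 2)).card := Finset.card_le_card h
  _ = 1 := by simp
  _ ≤ q15 s := le_refl _

lemma Pupd_zero : Pupd 0 = Pbar := by simp [Pupd]

lemma Pupd_one : Pupd 1 = Pt 1 := by
  simp [Pupd, Function.update]

lemma ir_mu1 : IndivRational Pupd mu1 := by
  intro i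
  fin_cases i <;> simp [Pupd, Function.update, mu1, Pbar, Pt]

lemma maximal_mu1 : MaximalMatching Pupd q15 mu1 := by
  intro μ' hf hir
  rw [msize_mu1]
  by_contra h
  push_neg at h
  have h : 1 < (univ.filter fun i => μ' i ≠ none).card := h
  -- msize μ' ≥ 2, so both students assigned
  have h0 : μ' 0 ≠ none := by
    by_contra h0
    have : (univ.filter fun i => μ' i ≠ none) ⊆ {1} := by
      intro i hi
      simp only [mem_filter] at hi
      fin_cases i
      · exact absurd h0 hi.2
      · simp
    have := Finset.card_le_card this
    simp only [Finset.card_singleton] at this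
    omega
  have h1 : μ' 1 ≠ none := by
    by_contra h1
    have : (univ.filter fun i => μ' i ≠ none) ⊆ {0} := by
      intro i hi
      simp only [mem_filter] at hi
      fin_cases i
      · simp
      · exact absurd h1 hi.2
    have := Finset.card_le_card this
    simp only [Finset.card_singleton] at this
    omega
  -- IR forces both to school 0
  have e0 : μ' 0 = some 0 := by
    have := hir 0
    rw [Pupd_zero] at this
    rcases ho : μ' 0 with _ | s
    · exact absurd ho h0
    · rw [ho] at this
      fin_cases s
      · rfl
      · simp [Pbar] at this
  have e1 : μ' 1 = some 0 := by
    have := hir 1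
    rw [Pupd_one] at this
    rcases ho : μ' 1 with _ | s
    · exact absurd ho h1
    · rw [ho] at this
      fin_cases s
      · rfl
      · simp [Pt] at this
  have hsub : {0, 1} ⊆ (univ.filter fun i => μ' i = some 0) := by
    intro i hi
    simp only [Finset.mem_insert, Finset.mem_singleton] at hi
    rcases hi with rfl | rfl <;> simp [e0, e1]
  have := Finset.card_le_card hsub
  have hcard : ({0, 1} : Finset (Fin 2)).card = 2 := by decide
  have := hf 0
  simp only [q15] at this
  omega

lemma ir_muBoth : IndivRational Pt muBoth := by
  intro i
  fin_cases i <;> simp [muBoth, Pt]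

lemma Pt_ne_Pupd : Pt ≠ Pupd := by
  intro h
  have : Pt 0 = Pupd 0 := congrFun h 0
  rw [Pupd_zero] at this
  have := congrFun (congrArg Subtype.val this) (some 1)
  simp [Pt, Pbar] at this

/-- there is a maximal mechanism under which some student
strictly gains by misreporting while strictly fewer students get assigned. -/
theorem maximal_mechanism_manipulable_size_drop :
    ∃ ψ : Mechanism (Fin 2) (Fin 2), MaximalMech q15 ψ ∧
      ψ Pt = muBoth ∧ ψ (Function.update Pt 0 Pbar) 0 = some 0 ∧
      (Pt 0).1 (ψ Pt 0) < (Pt 0).1 (ψ (Function.update Pt 0 Pbar) 0) ∧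
      msize (ψ (Function.update Pt 0 Pbar)) < msize (ψ Pt) := by
  classical
  set ψ : Mechanism (Fin 2) (Fin 2) := fun P =>
    if P = Pt then muBoth
    else if P = Pupd then mu1
    else (exists_maximal P).choose with hψ
  have hPt : ψ Pt = muBoth := by simp [hψ]
  have hPupd : ψ Pupd = mu1 := by
    simp only [hψ]
    rw [if_neg (fun h => Pt_ne_Pupd h.symm)]
    simp
  have hprops : ∀ P, Feasible q15 (ψ P) ∧ IndivRational P (ψ P) ∧
      MaximalMatching P q15 (ψ P) := by
    intro P
    by_cases h1 : P = Pt
    · subst h1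
      rw [hPt]
      refine ⟨feasible_muBoth, ir_muBoth, ?_⟩
      intro μ' _ _
      rw [msize_muBoth]
      exact msize_le_two μ'
    · by_cases h2 : P = Pupd
      · subst h2
        rw [hPupd]
        exact ⟨feasible_mu1, ir_mu1, maximal_mu1⟩
      · have : ψ P = (exists_maximal P).choose := by simp [hψ, h1, h2]
        rw [this]
        exact (exists_maximal P).choose_spec
  have hupd : Function.update Pt 0 Pbar = Pupd := rfl
  refine ⟨ψ, ⟨⟨fun P => ⟨(hprops P).1, (hprops P).2.1⟩, fun P => (hprops P).2.2⟩,
    hPt, ?_, ?_, ?_⟩⟩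
  · rw [hupd, hPupd]; rfl
  · rw [hupd, hPupd, hPt]
    simp [muBoth, mu1, Pt]
  · rw [hupd, hPupd, hPt, msize_mu1, msize_muBoth]
    omega
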